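/- Let A be an n×n complex matrix with no eigenvalues on the imaginary axis. A solution u of the ODE u'(t) = A u(t) on the half-line [0,∞) is bounded if and only if its initial value u(0) lies in the sum of the generalized eigenspaces of A corresponding to eigenvalues with negative real part. -/

import Mathlib

open NormedSpace Filter Topology Set

section Aux

variable {V : Type*} [NormedAddCommGroup V] [NormedSpace ℂ V] [CompleteSpace V]

private noncomputable instance auxRatNormedAlgebra : NormedAlgebra ℚ (V →L[ℂ] V) :=
  NormedAlgebra.restrictScalars ℚ ℂ _

private lemma aux_real_smul_clm (F : V →L[ℂ] V) (t : ℝ) : t • F = (t : ℂ) • F := by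
  rw [← smul_one_smul ℂ t F, Complex.real_smul, mul_one]

private lemma aux_exp_apply_eq_tsum (F : V →L[ℂ] V) (x : V) :
    exp F x = ∑' k : ℕ, ((k.factorial : ℂ)⁻¹) • (F ^ k) x := by
  rw [exp_eq_tsum ℂ]
  exact ((ContinuousLinearMap.apply ℂ V x).map_tsum (expSeries_summable' F)).trans (by simp)

private lemma aux_exp_formula (F : V →L[ℂ] V) (μ : ℂ) (m : ℕ) (x : V)
    (hx : ((F - μ • 1) ^ m) x = 0) (t : ℝ) :
    exp (t • F) x = Complex.exp (t * μ) •
      ∑ k ∈ Finset.range m, ((t : ℂ) ^ k * (k.factorial : ℂ)⁻¹) • ((F - μ • 1) ^ k) x := by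
  set N := F - μ • 1 with hN
  have hts : t • F = ((t : ℂ) * μ) • (1 : V →L[ℂ] V) + (t : ℂ) • N := by
    rw [aux_real_smul_clm, hN, smul_sub, smul_smul]; abel
  have hcomm : Commute (((t : ℂ) * μ) • (1 : V →L[ℂ] V)) ((t : ℂ) • N) :=
    ((Commute.one_left _).smul_left _)
  rw [hts, exp_add_of_commute hcomm]
  have h1 : exp (((t : ℂ) * μ) • (1 : V →L[ℂ] V)) = Complex.exp (t * μ) • 1 := by
    rw [← Algebra.algebraMap_eq_smul_one, ← algebraMap_exp_comm, ← Complex.exp_eq_exp_ℂ,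
      Algebra.algebraMap_eq_smul_one]
  rw [h1, ContinuousLinearMap.mul_apply, ContinuousLinearMap.smul_apply,
    ContinuousLinearMap.one_apply]
  congr 1
  rw [aux_exp_apply_eq_tsum]
  have hvanish : ∀ k ∉ Finset.range m,
      ((k.factorial : ℂ)⁻¹) • (((t : ℂ) • N) ^ k) x = 0 := by
    intro k hk
    rw [Finset.mem_range, not_lt] at hk
    have : N ^ k = N ^ (k - m) * N ^ m := by rw [← pow_add]; congr 1; omega
    rw [smul_pow, ContinuousLinearMap.smul_apply, this, ContinuousLinearMap.mul_apply, hx,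
      map_zero, smul_zero, smul_zero]
  rw [tsum_eq_sum hvanish]
  refine Finset.sum_congr rfl fun k _ => ?_
  rw [smul_pow, ContinuousLinearMap.smul_apply, smul_smul, mul_comm]

private lemma aux_pow_mul_exp_tendsto_zero {a : ℝ} (ha : a < 0) (k : ℕ) :
    Tendsto (fun t : ℝ => t ^ k * Real.exp (a * t)) atTop (𝓝 0) := by
  have h1 : Tendsto (fun s : ℝ => ((-a)⁻¹) ^ k * (s ^ k * Real.exp (-s))) atTop (𝓝 0) := by
    simpa using (Real.tendsto_pow_mul_exp_neg_atTop_nhds_zero k).const_mul (((-a)⁻¹) ^ k)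
  have h2 : Tendsto (fun t : ℝ => (-a) * t) atTop atTop :=
    Tendsto.const_mul_atTop (by linarith) tendsto_id
  refine (h1.comp h2).congr fun t => ?_
  simp only [Function.comp_apply]
  have h3 : -(-a * t) = a * t := by ring
  rw [h3, ← mul_assoc, ← mul_pow]
  congr 2
  field_simp
  rw [mul_comm, mul_div_assoc, div_self ha.ne, mul_one]

private lemma aux_exp_decay (F : V →L[ℂ] V) (μ : ℂ) (hμ : μ.re < 0) (m : ℕ) (x : V)
    (hx : ((F - μ • 1) ^ m) x = 0) :
    Tendsto (fun t : ℝ => exp (t • F) x) atTop (𝓝 0) := by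
  rw [tendsto_zero_iff_norm_tendsto_zero]
  have hg : Tendsto (fun t : ℝ =>
      ∑ k ∈ Finset.range m, (t ^ k * Real.exp (μ.re * t)) * ‖((F - μ • 1) ^ k) x‖)
      atTop (𝓝 0) := by
    have := fun k => (aux_pow_mul_exp_tendsto_zero hμ k).mul_const ‖((F - μ • 1) ^ k) x‖
    simpa using tendsto_finset_sum (Finset.range m) (fun k _ => this k)
  refine squeeze_zero' (Eventually.of_forall fun t => norm_nonneg _) ?_ hg
  filter_upwards [eventually_ge_atTop (0:ℝ)] with t ht
  rw [aux_exp_formula F μ m x hx t, norm_smul]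
  have h1 : ‖Complex.exp (t * μ)‖ = Real.exp (μ.re * t) := by
    rw [Complex.norm_exp]
    congr 1
    simp [mul_comm]
  rw [h1]
  calc Real.exp (μ.re * t) * ‖∑ k ∈ Finset.range m,
        ((t : ℂ) ^ k * (k.factorial : ℂ)⁻¹) • ((F - μ • 1) ^ k) x‖
      ≤ Real.exp (μ.re * t) * ∑ k ∈ Finset.range m,
        (t ^ k * (k.factorial : ℝ)⁻¹) * ‖((F - μ • 1) ^ k) x‖ := by
        refine mul_le_mul_of_nonneg_left ?_ (Real.exp_pos _).le
        refine (norm_sum_le _ _).trans (Finset.sum_le_sum fun k _ => ?_)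
        rw [norm_smul]
        apply mul_le_mul_of_nonneg_right _ (norm_nonneg _)
        rw [norm_mul, norm_pow]
        simp [abs_of_nonneg ht]
    _ ≤ ∑ k ∈ Finset.range m, (t ^ k * Real.exp (μ.re * t)) * ‖((F - μ • 1) ^ k) x‖ := by
        rw [Finset.mul_sum]
        refine Finset.sum_le_sum fun k _ => ?_
        have hfac : (k.factorial : ℝ)⁻¹ ≤ 1 := by
          rw [inv_le_one_iff₀]
          right; exact_mod_cast k.factorial_pos
        have h2 : Real.exp (μ.re * t) * (t ^ k * (k.factorial:ℝ)⁻¹) ≤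
            Real.exp (μ.re * t) * (t ^ k * 1) := by
          refine mul_le_mul_of_nonneg_left (mul_le_mul_of_nonneg_left hfac (by positivity))
            (Real.exp_pos _).le
        calc Real.exp (μ.re * t) * (t ^ k * (k.factorial:ℝ)⁻¹ * ‖((F - μ • 1) ^ k) x‖)
            = Real.exp (μ.re * t) * (t ^ k * (k.factorial:ℝ)⁻¹) * ‖((F - μ • 1) ^ k) x‖ := by
              ring
          _ ≤ Real.exp (μ.re * t) * (t ^ k * 1) * ‖((F - μ • 1) ^ k) x‖ :=
              mul_le_mul_of_nonneg_right h2 (norm_nonneg _)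
          _ = (t ^ k * Real.exp (μ.re * t)) * ‖((F - μ • 1) ^ k) x‖ := by ring

/-- The set of vectors whose trajectory under `exp (t • F)` tends to zero is a submodule. -/
private def decaySubmodule (F : V →L[ℂ] V) : Submodule ℂ V where
  carrier := {x | Tendsto (fun t : ℝ => exp (t • F) x) atTop (𝓝 0)}
  zero_mem' := by simpa using (tendsto_const_nhds :
    Tendsto (fun _ : ℝ => (0 : V)) atTop (𝓝 0))
  add_mem' := fun {a b} ha hb => by simpa [map_add] using ha.add hb
  smul_mem' := fun c a ha => by simpa [map_smul] using ha.const_smul c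

private lemma mem_decaySubmodule {F : V →L[ℂ] V} {x : V} :
    x ∈ decaySubmodule F ↔ Tendsto (fun t : ℝ => exp (t • F) x) atTop (𝓝 0) := Iff.rfl

private lemma aux_decay_of_mem_iSup (F : V →L[ℂ] V) (m : ℕ) {x : V}
    (hx : x ∈ ⨆ μ ∈ {μ : ℂ | μ.re < 0}, LinearMap.ker (((F - μ • 1) ^ m : V →L[ℂ] V) : V →ₗ[ℂ] V)) :
    Tendsto (fun t : ℝ => exp (t • F) x) atTop (𝓝 0) := by
  refine (iSup₂_le fun μ hμ => ?_ : _ ≤ decaySubmodule F) hx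
  intro y hy
  exact aux_exp_decay F μ hμ m y hy

private lemma aux_bounded_of_tendsto_zero {f : ℝ → V} (hc : Continuous f)
    (h : Tendsto f atTop (𝓝 0)) : ∃ C : ℝ, ∀ t : ℝ, 0 ≤ t → ‖f t‖ ≤ C := by
  have : ∀ᶠ t in atTop, ‖f t‖ ≤ 1 := by
    have hn := h.norm
    simp only [norm_zero] at hn
    exact hn.eventually (eventually_le_nhds one_pos)
  obtain ⟨T, hT⟩ := eventually_atTop.mp this
  obtain ⟨C, hC⟩ := (isCompact_Icc (a := (0:ℝ)) (b := T)).exists_bound_of_continuousOn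
    hc.continuousOn
  refine ⟨max C 1, fun t ht => ?_⟩
  rcases le_total t T with h1 | h1
  · exact le_max_of_le_left (hC t ⟨ht, h1⟩)
  · exact le_max_of_le_right (hT t h1)

private lemma aux_continuous_exp_apply (F : V →L[ℂ] V) (x : V) :
    Continuous fun t : ℝ => exp (t • F) x :=
  ((ContinuousLinearMap.apply ℂ V x).continuous).comp
    (exp_continuous.comp (continuous_id.smul continuous_const))

private lemma aux_solution_eq_exp (F : V →L[ℂ] V) (u : ℝ → V)
    (hu : ∀ t : ℝ, 0 ≤ t → HasDerivAt u (F (u t)) t) :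
    ∀ t : ℝ, 0 ≤ t → u t = exp (t • F) (u 0) := by
  intro t ht
  set g : ℝ → V := fun s => exp (s • F) (u 0) with hg
  have hexpeq : (exp : (V →L[ℂ] V) → (V →L[ℂ] V)) = exp := rfl
  have hgder : ∀ s : ℝ, HasDerivAt g (F (g s)) s := by
    intro s
    have h1 : HasDerivAt (fun s : ℝ => exp (s • F)) (exp (s • F) * F) s :=
      hasDerivAt_exp_smul_const (𝕂 := ℝ) F s
    have h2 := (((ContinuousLinearMap.apply ℂ V (u 0)).restrictScalars
      ℝ).hasFDerivAt).comp_hasDerivAt s h1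
    have hcomm : exp (s • F) * F = F * exp (s • F) :=
      (((Commute.refl F).smul_right s).exp_right).symm.eq
    rw [hcomm] at h2
    simpa [hg, hexpeq, ContinuousLinearMap.mul_apply, Function.comp_def] using h2
  have key : EqOn u g (Icc 0 t) := by
    refine ODE_solution_unique (v := fun _ x => F x) (K := ‖F‖₊) (fun _ => F.lipschitz)
      (fun s hs => ((hu s hs.1).continuousAt).continuousWithinAt)
      (fun s hs => ((hu s hs.1).hasDerivWithinAt))
      (fun s _ => (hgder s).continuousAt.continuousWithinAt)
      (fun s _ => (hgder s).hasDerivWithinAt) ?_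
    simp [hg, exp_zero]
  exact key ⟨ht, le_rfl⟩

private lemma aux_neg_pow_apply (F : V →L[ℂ] V) (μ : ℂ) (m : ℕ) (x : V) :
    (((-F) - (-μ) • 1) ^ m) x = ((-1 : ℂ) ^ m) • ((F - μ • 1) ^ m) x := by
  have h1 : (-F) - (-μ) • (1 : V →L[ℂ] V) = -(F - μ • 1) := by
    rw [neg_smul]; abel
  have h2 : (-(F - μ • 1)) ^ m = ((-1 : ℂ) ^ m) • (F - μ • 1) ^ m := by
    rw [neg_pow, show ((-1 : V →L[ℂ] V)) = (-1 : ℂ) • 1 from (neg_one_smul ℂ _).symm,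
      smul_pow, one_pow, smul_mul_assoc, one_mul]
  rw [h1, h2, ContinuousLinearMap.smul_apply]

private lemma aux_neg_ker (F : V →L[ℂ] V) (μ : ℂ) (m : ℕ) :
    LinearMap.ker (((F - μ • 1) ^ m : V →L[ℂ] V) : V →ₗ[ℂ] V) = LinearMap.ker ((((-F) - (-μ) • 1) ^ m : V →L[ℂ] V) : V →ₗ[ℂ] V) := by
  ext x
  simp only [LinearMap.mem_ker, ContinuousLinearMap.coe_coe]
  rw [aux_neg_pow_apply, smul_eq_zero]
  simp [pow_ne_zero]

private lemma aux_commute_sub_smul_one (F : V →L[ℂ] V) (μ : ℂ) : Commute F (F - μ • 1) :=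
  (Commute.refl F).sub_right ((Commute.one_right F).smul_right μ)

private lemma aux_commute_exp (F N : V →L[ℂ] V) (h : Commute F N) (t : ℝ) (m : ℕ) :
    Commute (exp (t • F)) (N ^ m) := by
  rw [aux_real_smul_clm]
  exact Commute.exp_left ((h.smul_left ((t : ℂ))).pow_right m)

private lemma aux_exp_neg_mul_exp (F : V →L[ℂ] V) (t : ℝ) :
    exp (t • (-F)) * exp (t • F) = 1 := by
  rw [aux_real_smul_clm, aux_real_smul_clm]
  have hcm : Commute ((t : ℂ) • (-F)) ((t : ℂ) • F) :=
    (((Commute.refl F).neg_left).smul_left ((t : ℂ))).smul_right ((t : ℂ))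
  have hzero : (t : ℂ) • (-F) + (t : ℂ) • F = 0 := by rw [smul_neg, neg_add_cancel]
  rw [← exp_add_of_commute hcm, hzero, exp_zero]

end Aux

section Main

open Module

set_option maxHeartbeats 2000000 in
set_option synthInstance.maxHeartbeats 400000 in
/-- For a matrix `A` with no purely imaginary eigenvalues, a solution of
`u' = A u` on `[0, ∞)` is bounded iff `u 0` lies in the sum of the generalized
eigenspaces for eigenvalues with negative real part. -/
theorem bounded_solution_iff_initial_in_negative_spectral_subspace
    (n : ℕ) (A : Matrix (Fin n) (Fin n) ℂ)
    (h : ∀ μ : ℂ, Module.End.HasEigenvalue (Matrix.mulVecLin A) μ → μ.re ≠ 0)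
    (u : ℝ → (Fin n → ℂ))
    (hu : ∀ t : ℝ, 0 ≤ t → HasDerivAt u (A.mulVec (u t)) t) :
    (∃ C : ℝ, ∀ t : ℝ, 0 ≤ t → ‖u t‖ ≤ C) ↔
      u 0 ∈ ⨆ μ ∈ {μ : ℂ | μ.re < 0},
        LinearMap.ker (((Matrix.mulVecLin A : Module.End ℂ (Fin n → ℂ)) - μ • 1) ^ n) := by
  classical
  set f : Module.End ℂ (Fin n → ℂ) := Matrix.mulVecLin A with hf
  set F : (Fin n → ℂ) →L[ℂ] (Fin n → ℂ) := LinearMap.toContinuousLinearMap f with hFdef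
  -- bridge between continuous and plain linear maps
  have bridge : ∀ (μ : ℂ) (k : ℕ) (x : Fin n → ℂ),
      ((F - μ • 1) ^ k) x = ((f - μ • 1) ^ k) x := by
    intro μ k x
    induction k generalizing x with
    | zero => simp
    | succ k ih =>
      rw [pow_succ', pow_succ', ContinuousLinearMap.mul_apply, Module.End.mul_apply, ih]
      simp [hFdef]
  have hker : ∀ μ : ℂ, LinearMap.ker ((f - μ • 1) ^ n)
      = LinearMap.ker (((F - μ • 1) ^ n : (Fin n → ℂ) →L[ℂ] (Fin n → ℂ)) : (Fin n → ℂ) →ₗ[ℂ] (Fin n → ℂ)) := by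
    intro μ
    ext x
    simp only [LinearMap.mem_ker, ContinuousLinearMap.coe_coe]
    rw [bridge]
  -- the negative and positive spectral subspaces
  set S : Submodule ℂ (Fin n → ℂ) :=
    ⨆ μ ∈ {μ : ℂ | μ.re < 0}, LinearMap.ker (((F - μ • 1) ^ n : (Fin n → ℂ) →L[ℂ] (Fin n → ℂ)) : (Fin n → ℂ) →ₗ[ℂ] (Fin n → ℂ)) with hS
  set U : Submodule ℂ (Fin n → ℂ) :=
    ⨆ μ : {μ : ℂ // 0 < μ.re}, LinearMap.ker (((F - (μ : ℂ) • 1) ^ n : (Fin n → ℂ) →L[ℂ] (Fin n → ℂ)) : (Fin n → ℂ) →ₗ[ℂ] (Fin n → ℂ)) with hU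
  have hSrw : (⨆ μ ∈ {μ : ℂ | μ.re < 0},
      LinearMap.ker ((f - μ • 1) ^ n)) = S := by
    rw [hS]
    exact iSup_congr fun μ => iSup_congr fun _ => hker μ
  rw [hSrw]
  -- the ODE is governed by `F`
  have hu' : ∀ t : ℝ, 0 ≤ t → HasDerivAt u (F (u t)) t := by
    intro t ht
    have : F (u t) = A.mulVec (u t) := by simp [hFdef, hf]
    rw [this]
    exact hu t ht
  have hrep := aux_solution_eq_exp F u hu'
  -- the whole space decomposes
  have hfr : Module.finrank ℂ (Fin n → ℂ) = n := Module.finrank_fin_fun ℂ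
  have htop : S ⊔ U = ⊤ := by
    rw [eq_top_iff, ← Module.End.iSup_maxGenEigenspace_eq_top f]
    refine iSup_le fun μ => ?_
    have hmax : f.maxGenEigenspace μ = LinearMap.ker ((f - μ • 1) ^ n) := by
      rw [Module.End.maxGenEigenspace_eq_genEigenspace_finrank, hfr,
        Module.End.genEigenspace_nat]
    rcases lt_trichotomy μ.re 0 with hlt | heq | hgt
    · refine le_sup_of_le_left ?_
      rw [hmax, hker μ, hS]
      exact le_iSup₂ (f := fun ν (_ : ν ∈ {ν : ℂ | ν.re < 0}) =>
        LinearMap.ker (((F - ν • 1) ^ n : (Fin n → ℂ) →L[ℂ] (Fin n → ℂ)) : (Fin n → ℂ) →ₗ[ℂ] (Fin n → ℂ))) μ hlt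
    · have hbot : f.maxGenEigenspace μ = ⊥ := by
        by_contra hne
        refine h μ ?_ heq
        have hev : f.HasUnifEigenvalue μ ⊤ := hne
        exact (Module.End.hasUnifEigenvalue_iff_hasUnifEigenvalue_one (by simp)).mp hev
      rw [hbot]
      exact bot_le
    · refine le_sup_of_le_right ?_
      rw [hmax, hker μ, hU]
      exact le_iSup (fun ν : {ν : ℂ // 0 < ν.re} =>
        LinearMap.ker (((F - (ν : ℂ) • 1) ^ n : (Fin n → ℂ) →L[ℂ] (Fin n → ℂ)) : (Fin n → ℂ) →ₗ[ℂ] (Fin n → ℂ))) ⟨μ, hgt⟩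
  -- boundedness of stable trajectories
  have hSbdd : ∀ x ∈ S, ∃ C : ℝ, ∀ t : ℝ, 0 ≤ t → ‖exp (t • F) x‖ ≤ C := by
    intro x hx
    exact aux_bounded_of_tendsto_zero (aux_continuous_exp_apply F x)
      (aux_decay_of_mem_iSup F n hx)
  -- trajectories from `U` under the reversed flow decay
  have hUdecay : ∀ x ∈ U, Tendsto (fun t : ℝ => exp (t • (-F)) x) atTop (𝓝 0) := by
    intro x hx
    refine aux_decay_of_mem_iSup (-F) n ?_
    refine (iSup_le fun μ => ?_ : U ≤ _) hx
    have := aux_neg_ker F (μ : ℂ) n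
    rw [this]
    exact le_iSup₂ (f := fun ν (_ : ν ∈ {ν : ℂ | ν.re < 0}) =>
      LinearMap.ker ((((-F) - ν • 1) ^ n : (Fin n → ℂ) →L[ℂ] (Fin n → ℂ)) : (Fin n → ℂ) →ₗ[ℂ] (Fin n → ℂ))) (-(μ : ℂ)) (by simpa using μ.2)
  -- `U` is invariant under the flow
  have hUinv : ∀ (t : ℝ), ∀ x ∈ U, exp (t • F) x ∈ U := by
    intro t x hx
    rw [hU] at hx
    refine Submodule.iSup_induction (motive := fun y => exp (t • F) y ∈ U)
      (fun μ : {μ : ℂ // 0 < μ.re} => LinearMap.ker (((F - (μ : ℂ) • 1) ^ n : (Fin n → ℂ) →L[ℂ] (Fin n → ℂ)) : (Fin n → ℂ) →ₗ[ℂ] (Fin n → ℂ))) hx ?_ ?_ ?_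
    · intro μ y hy
      have hyk : ((F - (μ : ℂ) • 1) ^ n) y = 0 := hy
      have hcom : Commute (exp (t • F)) ((F - (μ : ℂ) • 1) ^ n) :=
        aux_commute_exp F _ (aux_commute_sub_smul_one F (μ : ℂ)) t n
      have hmem : exp (t • F) y ∈ LinearMap.ker (((F - (μ : ℂ) • 1) ^ n : (Fin n → ℂ) →L[ℂ] (Fin n → ℂ)) : (Fin n → ℂ) →ₗ[ℂ] (Fin n → ℂ)) := by
        have : ((F - (μ : ℂ) • 1) ^ n) (exp (t • F) y) = 0 := by
          rw [← ContinuousLinearMap.mul_apply, ← hcom.eq, ContinuousLinearMap.mul_apply,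
            hyk, map_zero]
        exact this
      exact Submodule.mem_iSup_of_mem μ hmem
    · simp [zero_mem]
    · intro y z hy hz
      rw [map_add]
      exact add_mem hy hz
  constructor
  · -- bounded → u 0 ∈ S
    rintro ⟨C, hC⟩
    have hu0 : u 0 ∈ S ⊔ U := by
      have : u 0 ∈ (⊤ : Submodule ℂ (Fin n → ℂ)) := Submodule.mem_top
      rwa [← htop] at this
    obtain ⟨s, hs, w, hw, hsw⟩ := Submodule.mem_sup.mp hu0
    obtain ⟨Cs, hCs⟩ := hSbdd s hs
    set M : ℝ := max (C + Cs) 0 with hMdef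
    have hM : ∀ t : ℝ, 0 ≤ t → ‖exp (t • F) w‖ ≤ M := by
      intro t ht
      have h1 : exp (t • F) (u 0) = exp (t • F) s + exp (t • F) w := by
        rw [← hsw, map_add]
      have h2 : exp (t • F) w = u t - exp (t • F) s := by
        rw [hrep t ht, h1]; abel
      rw [h2]
      refine (norm_sub_le _ _).trans ?_
      exact le_trans (add_le_add (hC t ht) (hCs t ht)) (le_max_left _ _)
    have hw0 : w = 0 := by
      set b := Module.finBasis ℂ ↥U with hb
      set φ : Fin (Module.finrank ℂ ↥U) → (↥U →L[ℂ] ℂ) :=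
        fun i => LinearMap.toContinuousLinearMap (b.coord i) with hφ
      set c : ℝ → ℝ :=
        fun t => ∑ i, (M * ‖φ i‖) * ‖exp (t • (-F)) ((b i : Fin n → ℂ))‖ with hc
      have hc0 : Tendsto c atTop (𝓝 0) := by
        have hterm : ∀ i, Tendsto
            (fun t : ℝ => (M * ‖φ i‖) * ‖exp (t • (-F)) ((b i : Fin n → ℂ))‖)
            atTop (𝓝 0) := by
          intro i
          simpa using ((hUdecay _ (b i).2).norm).const_mul (M * ‖φ i‖)
        simpa [hc] using tendsto_finset_sum Finset.univ (fun i _ => hterm i)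
      have hle : ∀ t : ℝ, 0 ≤ t → ‖w‖ ≤ c t := by
        intro t ht
        set z : ↥U := ⟨exp (t • F) w, hUinv t w hw⟩ with hz
        have hzw : exp (t • (-F)) (z : Fin n → ℂ) = w := by
          have hmul : exp (t • (-F)) * exp (t • F) = 1 := aux_exp_neg_mul_exp F t
          calc exp (t • (-F)) ((z : Fin n → ℂ))
              = (exp (t • (-F)) * exp (t • F)) w := by
                rw [ContinuousLinearMap.mul_apply]
            _ = w := by rw [hmul, ContinuousLinearMap.one_apply]
        have hzrep : (z : Fin n → ℂ) = ∑ i, b.repr z i • (b i : Fin n → ℂ) := by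
          conv_lhs => rw [← b.sum_repr z]
          push_cast
          rfl
        have hwsum : w = ∑ i, b.repr z i • exp (t • (-F)) (b i : Fin n → ℂ) := by
          rw [← hzw, hzrep, map_sum]
          simp [map_smul]
        rw [hwsum]
        refine (norm_sum_le _ _).trans ?_
        refine Finset.sum_le_sum fun i _ => ?_
        rw [norm_smul]
        have h1 : ‖b.repr z i‖ ≤ ‖φ i‖ * M := by
          have h2 : (φ i) z = b.repr z i := by simp [hφ]
          have h3 := (φ i).le_opNorm z
          rw [h2] at h3
          refine h3.trans (mul_le_mul_of_nonneg_left ?_ (norm_nonneg _))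
          show ‖z‖ ≤ M
          have h4 : ‖z‖ = ‖exp (t • F) w‖ := rfl
          rw [h4]
          exact hM t ht
        calc ‖b.repr z i‖ * ‖exp (t • (-F)) (b i : Fin n → ℂ)‖
            ≤ (‖φ i‖ * M) * ‖exp (t • (-F)) (b i : Fin n → ℂ)‖ :=
              mul_le_mul_of_nonneg_right h1 (norm_nonneg _)
          _ = (M * ‖φ i‖) * ‖exp (t • (-F)) (b i : Fin n → ℂ)‖ := by ring
      have : ‖w‖ ≤ 0 :=
        ge_of_tendsto hc0 (eventually_atTop.mpr ⟨0, fun t ht => hle t ht⟩)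
      exact norm_le_zero_iff.mp this
    rw [← hsw, hw0, add_zero]
    exact hs
  · -- u 0 ∈ S → bounded
    intro h0
    obtain ⟨C, hC⟩ := hSbdd (u 0) h0
    exact ⟨C, fun t ht => by rw [hrep t ht]; exact hC t ht⟩

end Main
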